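/- Let n, t ∈ ℕ with t < n, let V_I be a nonempty proposal set and V_O a decision set, and let val be a validity property satisfying the containment condition, witnessed by a function Γ : I → V_O with Γ(c) ∈ ⋂_{c' ∈ Cnt(c)} val(c') for every c ∈ I. Suppose there exists a deterministic algorithm solving the interactive-consistency agreement problem in the omission model, i.e., the val_IC-agreement problem with proposal set V_I, decision set I_n, and val_IC(c) = {c' ∈ I_n : c' ⊒ c} for every c ∈ I. Then there exists a deterministic algorithm solving the val-agreement problem in the omission model (for the same n and t). -/

import Mathlib

/-- A message: a sender, a (distinct) receiver and a round number. -/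
structure Message (n : ℕ) where
  sender : Fin n
  receiver : Fin n
  round : ℕ
  ne : sender ≠ receiver

/-- A valid set of messages received by a process in state `s`:
every message has the right receiver and round, and there is
at most one message per sender. -/
def ValidRecv {n : ℕ} {St : Type} (proc : St → Fin n) (rnd : St → ℕ)
    (s : St) (M : Set (Message n)) : Prop :=
  (∀ m ∈ M, m.receiver = proc s ∧ m.round = rnd s) ∧
  (∀ m ∈ M, ∀ m' ∈ M, m.sender = m'.sender → m = m')

/-- A deterministic algorithm in the synchronous (omission) model:
a type of local states recording a process, a round, a proposal and a
decision, initial states and initial messages for every proposal, and a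
deterministic transition function. -/
structure Algorithm (n : ℕ) (Vi Vo : Type) where
  St : Type
  proc : St → Fin n
  rnd : St → ℕ
  prop : St → Vi
  dec : St → Option Vo
  init : Fin n → Vi → St
  initMsgs : Fin n → Vi → Set (Message n)
  trans : St → Set (Message n) → St × Set (Message n)
  init_proc : ∀ i v, proc (init i v) = i
  init_rnd : ∀ i v, rnd (init i v) = 1
  init_prop : ∀ i v, prop (init i v) = v
  init_dec : ∀ i v, dec (init i v) = none
  initMsgs_sender : ∀ i v, ∀ m ∈ initMsgs i v, m.sender = i
  initMsgs_round : ∀ i v, ∀ m ∈ initMsgs i v, m.round = 1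
  initMsgs_uniq : ∀ i v, ∀ m ∈ initMsgs i v, ∀ m' ∈ initMsgs i v,
    m.receiver = m'.receiver → m = m'
  trans_ok : ∀ s M, ValidRecv proc rnd s M →
    proc (trans s M).1 = proc s ∧
    rnd (trans s M).1 = rnd s + 1 ∧
    prop (trans s M).1 = prop s ∧
    (dec s ≠ none → dec (trans s M).1 = dec s) ∧
    (∀ m ∈ (trans s M).2, m.sender = proc s ∧ m.round = rnd s + 1) ∧
    (∀ m ∈ (trans s M).2, ∀ m' ∈ (trans s M).2, m.receiver = m'.receiver → m = m')

/-- The data of an execution of algorithm `A`: the set of faulty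
processes and, for every process and round, a state and the four sets of
sent, send-omitted, received and receive-omitted messages. -/
structure Exec {n : ℕ} {Vi Vo : Type} (A : Algorithm n Vi Vo) where
  faulty : Set (Fin n)
  st : Fin n → ℕ → A.St
  sent : Fin n → ℕ → Set (Message n)
  sendOmit : Fin n → ℕ → Set (Message n)
  recvd : Fin n → ℕ → Set (Message n)
  recvOmit : Fin n → ℕ → Set (Message n)

/-- `j` is one of the rounds `1, …, k` (where `k ∈ ℕ ∪ {∞}`). -/
def InHorizon (k : ℕ∞) (j : ℕ) : Prop := 1 ≤ j ∧ (j : ℕ∞) ≤ k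

/-- `E` is a `k`-round execution of `A` with at most `t` faulty processes. -/
def IsExec {n : ℕ} {Vi Vo : Type} (t : ℕ) (A : Algorithm n Vi Vo) (k : ℕ∞)
    (E : Exec A) : Prop :=
  -- at most `t` faulty processes
  E.faulty.encard ≤ (t : ℕ∞) ∧
  -- every process starts in one of its initial states, with
  -- sent ∪ send-omitted equal to its prescribed initial send set
  ((1 : ℕ∞) ≤ k → ∀ i, ∃ v, E.st i 1 = A.init i v ∧
      E.sent i 1 ∪ E.sendOmit i 1 = A.initMsgs i v) ∧
  -- later states and sent ∪ send-omitted sets are obtained by the transition function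
  (∀ i j, 1 ≤ j → ((j + 1 : ℕ) : ℕ∞) ≤ k →
      A.trans (E.st i j) (E.recvd i j)
        = (E.st i (j + 1), E.sent i (j + 1) ∪ E.sendOmit i (j + 1))) ∧
  -- per-round well-formedness (fragments)
  (∀ i j, InHorizon k j →
      A.proc (E.st i j) = i ∧ A.rnd (E.st i j) = j ∧
      (∀ m ∈ E.sent i j ∪ E.sendOmit i j, m.sender = i ∧ m.round = j) ∧
      (∀ m ∈ E.recvd i j ∪ E.recvOmit i j, m.receiver = i ∧ m.round = j) ∧
      E.sent i j ∩ E.sendOmit i j = ∅ ∧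
      E.recvd i j ∩ E.recvOmit i j = ∅ ∧
      (∀ m ∈ E.sent i j ∪ E.sendOmit i j, ∀ m' ∈ E.sent i j ∪ E.sendOmit i j,
        m.receiver = m'.receiver → m = m') ∧
      (∀ m ∈ E.recvd i j ∪ E.recvOmit i j, ∀ m' ∈ E.recvd i j ∪ E.recvOmit i j,
        m.sender = m'.sender → m = m')) ∧
  -- send-validity
  (∀ i j, InHorizon k j → ∀ m ∈ E.sent i j,
      m ∈ E.recvd m.receiver j ∪ E.recvOmit m.receiver j) ∧
  -- receive-validity
  (∀ i j, InHorizon k j → ∀ m ∈ E.recvd i j ∪ E.recvOmit i j, m ∈ E.sent m.sender j) ∧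
  -- omission-validity
  (∀ i, (∃ j, InHorizon k j ∧ (E.sendOmit i j ≠ ∅ ∨ E.recvOmit i j ≠ ∅)) → i ∈ E.faulty)

/-- Process `i` proposes `v` in `E`. -/
def Proposes {n : ℕ} {Vi Vo : Type} {A : Algorithm n Vi Vo}
    (E : Exec A) (i : Fin n) (v : Vi) : Prop :=
  A.prop (E.st i 1) = v

/-- Process `i` decides `v` in the `k`-round execution `E`. -/
def Decides {n : ℕ} {Vi Vo : Type} {A : Algorithm n Vi Vo}
    (k : ℕ∞) (E : Exec A) (i : Fin n) (v : Vo) : Prop :=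
  ∃ j, InHorizon k j ∧ A.dec (E.st i j) = some v

/-- The number of messages sent (not send-omitted) by correct processes in `E`. -/
noncomputable def msgCount {n : ℕ} {Vi Vo : Type} {A : Algorithm n Vi Vo}
    (E : Exec A) : ℕ∞ :=
  {m : Message n | ∃ i, i ∉ E.faulty ∧ ∃ j, 1 ≤ j ∧ m ∈ E.sent i j}.encard

/-- The message complexity of `A`: the supremum, over all infinite
executions of `A` (with at most `t` faulty processes), of the number of
messages sent by correct processes. -/
noncomputable def MsgComplexity {n : ℕ} {Vi Vo : Type} (t : ℕ)
    (A : Algorithm n Vi Vo) : ℕ∞ :=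
  ⨆ E : {E : Exec A // IsExec t A ⊤ E}, msgCount E.1

/-- Two `k`-round executions are indistinguishable to process `i`: it has the
same proposal and receives exactly the same messages in every round of both. -/
def Indist {n : ℕ} {Vi Vo : Type} {A : Algorithm n Vi Vo}
    (k : ℕ∞) (E E' : Exec A) (i : Fin n) : Prop :=
  A.prop (E.st i 1) = A.prop (E'.st i 1) ∧
  ∀ j, InHorizon k j → E.recvd i j = E'.recvd i j

/-- Group `G ⊊ Π` of at most `t` processes is isolated from round `k` in the
infinite execution `E`: every process of `G` is faulty, send-omits no message,
and receive-omits exactly those messages sent to it in rounds `≥ k` by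
processes outside `G`. -/
def IsolatedFrom {n : ℕ} {Vi Vo : Type} {A : Algorithm n Vi Vo}
    (t : ℕ) (E : Exec A) (G : Set (Fin n)) (k : ℕ) : Prop :=
  G ≠ Set.univ ∧ G.encard ≤ (t : ℕ∞) ∧
  ∀ g ∈ G, g ∈ E.faulty ∧
    (∀ j, 1 ≤ j → E.sendOmit g j = ∅) ∧
    (∀ j, 1 ≤ j → E.recvOmit g j
      = {m | m.receiver = g ∧ m.sender ∉ G ∧ k ≤ j ∧ m ∈ E.sent m.sender j})

/-- An input configuration: an assignment of proposals to at least `n - t`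
processes (`none` marks processes outside the domain `π(c)`). -/
def IsInputConf (n t : ℕ) {Vi : Type} (c : Fin n → Option Vi) : Prop :=
  n - t ≤ {i | c i ≠ none}.ncard

/-- The containment relation `c ⊒ c'` between input configurations. -/
def Contains {n : ℕ} {Vi : Type} (c c' : Fin n → Option Vi) : Prop :=
  ∀ i, c' i ≠ none → c i = c' i

/-- The execution `E` corresponds to the input configuration `c`: the correct
processes of `E` are exactly those in `π(c)`, and each of them proposes its
value prescribed by `c`. -/
def CorrespondsTo {n : ℕ} {Vi Vo : Type} {A : Algorithm n Vi Vo}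
    (E : Exec A) (c : Fin n → Option Vi) : Prop :=
  ∀ i, (i ∉ E.faulty → c i = some (A.prop (E.st i 1))) ∧ (i ∈ E.faulty → c i = none)

/-- `A` solves the `val`-agreement problem in the omission model, tolerating
`t` omission-faulty processes: every infinite execution satisfies Termination,
Agreement, and decided values are admissible for the corresponding input
configuration. -/
def SolvesVal {n : ℕ} {Vi Vo : Type} (t : ℕ) (A : Algorithm n Vi Vo)
    (val : (Fin n → Option Vi) → Set Vo) : Prop :=
  ∀ E : Exec A, IsExec t A ⊤ E →
    -- Termination
    (∀ i, i ∉ E.faulty → ∃ v, Decides ⊤ E i v) ∧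
    -- Agreement
    (∀ i i' v v', i ∉ E.faulty → i' ∉ E.faulty →
      Decides ⊤ E i v → Decides ⊤ E i' v' → v = v') ∧
    -- Validity
    (∀ c, CorrespondsTo E c → ∀ i, i ∉ E.faulty → ∀ v, Decides ⊤ E i v → v ∈ val c)

/-- If `val` satisfies the containment condition (witnessed
by `Γ`) and the interactive-consistency agreement problem (proposal set `Vi`,
decision set `I_n ≃ (Fin n → Vi)`, with validity
`val_IC(c) = {c' ∈ I_n : c' ⊒ c}`) is solvable in the omission model, then the
`val`-agreement problem is solvable in the omission model (same `n`, `t`). -/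
theorem containment_condition_sufficient
    (n t : ℕ) (htn : t < n)
    (Vi Vo : Type) [Nonempty Vi]
    (val : (Fin n → Option Vi) → Set Vo)
    (hval : ∀ c : Fin n → Option Vi, IsInputConf n t c → (val c).Nonempty)
    (Γ : (Fin n → Option Vi) → Vo)
    (hΓ : ∀ c, IsInputConf n t c →
      ∀ c', IsInputConf n t c' → Contains c c' → Γ c ∈ val c')
    (hIC : ∃ AIC : Algorithm n Vi (Fin n → Vi),
      SolvesVal t AIC
        (fun c => {vec : Fin n → Vi | Contains (fun i => some (vec i)) c})) :
    ∃ A : Algorithm n Vi Vo, SolvesVal t A val := by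
  obtain ⟨AIC, hsol⟩ := hIC
  set g : (Fin n → Vi) → Vo := fun vec => Γ (fun i => some (vec i)) with hg
  refine ⟨{
    St := AIC.St
    proc := AIC.proc
    rnd := AIC.rnd
    prop := AIC.prop
    dec := fun s => (AIC.dec s).map g
    init := AIC.init
    initMsgs := AIC.initMsgs
    trans := AIC.trans
    init_proc := AIC.init_proc
    init_rnd := AIC.init_rnd
    init_prop := AIC.init_prop
    init_dec := fun i v => by show (AIC.dec (AIC.init i v)).map g = none; rw [AIC.init_dec]; rfl
    initMsgs_sender := AIC.initMsgs_sender
    initMsgs_round := AIC.initMsgs_round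
    initMsgs_uniq := AIC.initMsgs_uniq
    trans_ok := ?_ }, ?_⟩
  · intro s M hM
    obtain ⟨h1, h2, h3, h4, h5, h6⟩ := AIC.trans_ok s M hM
    refine ⟨h1, h2, h3, ?_, h5, h6⟩
    intro hne
    have hd : AIC.dec s ≠ none := by
      intro h
      simp only [h, Option.map_none] at hne
      exact hne rfl
    simp only [h4 hd]
  · intro E hE
    -- transport the execution to the IC algorithm
    let E' : Exec AIC :=
      { faulty := E.faulty, st := E.st, sent := E.sent, sendOmit := E.sendOmit,
        recvd := E.recvd, recvOmit := E.recvOmit }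
    have hE' : IsExec t AIC ⊤ E' := hE
    obtain ⟨term, agree, valid⟩ := hsol E' hE'
    -- relating decisions
    have fwd : ∀ i v, Decides ⊤ E i v →
        ∃ vec, Decides ⊤ E' i vec ∧ g vec = v := by
      intro i v ⟨j, hj, hdec⟩
      have hdec' : (AIC.dec (E.st i j)).map g = some v := hdec
      rw [Option.map_eq_some_iff] at hdec'
      obtain ⟨vec, hvec, hgv⟩ := hdec'
      exact ⟨vec, ⟨j, hj, hvec⟩, hgv⟩
    have bwd : ∀ i vec, Decides ⊤ E' i vec → Decides ⊤ E i (g vec) := by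
      intro i vec ⟨j, hj, hdec⟩
      refine ⟨j, hj, ?_⟩
      show (AIC.dec (E.st i j)).map g = some (g vec)
      rw [hdec]; rfl
    refine ⟨?_, ?_, ?_⟩
    · intro i hi
      obtain ⟨vec, hvec⟩ := term i hi
      exact ⟨g vec, bwd i vec hvec⟩
    · intro i i' v v' hi hi' hd hd'
      obtain ⟨vec, hvec, hgv⟩ := fwd i v hd
      obtain ⟨vec', hvec', hgv'⟩ := fwd i' v' hd'
      rw [← hgv, ← hgv', agree i i' vec vec' hi hi' hvec hvec']
    · intro c hc i hi v hd
      obtain ⟨vec, hvec, hgv⟩ := fwd i v hd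
      have hmem : Contains (fun i => some (vec i)) c :=
        valid c hc i hi vec hvec
      -- `c` is an input configuration
      have hcard : E.faulty.ncard ≤ t := by
        have h1 := hE'.1
        have h2 : E.faulty.encard ≤ (t : ℕ∞) := h1
        rw [Set.Finite.encard_eq_coe_toFinset_card (Set.toFinite _)] at h2
        rw [Set.ncard_eq_toFinset_card E.faulty (Set.toFinite _)]
        exact_mod_cast h2
      have hset : {i | c i ≠ none} = E.faultyᶜ := by
        ext j
        simp only [Set.mem_setOf_eq, Set.mem_compl_iff]
        constructor
        · intro hne hjf
          exact hne ((hc j).2 hjf)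
        · intro hjf
          rw [(hc j).1 hjf]
          simp
      have hIc : IsInputConf n t c := by
        unfold IsInputConf
        rw [hset]
        have := Set.ncard_add_ncard_compl E.faulty
        have hcn : Nat.card (Fin n) = n := by simp
        omega
      have hIfull : IsInputConf n t (fun i => some (vec i)) := by
        unfold IsInputConf
        have : {i : Fin n | (fun i => some (vec i)) i ≠ none} = Set.univ := by
          ext j; simp
        rw [this, Set.ncard_univ, Nat.card_eq_fintype_card, Fintype.card_fin]
        omega
      rw [← hgv]
      exact hΓ _ hIfull c hIc hmem
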